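/- If C is a Type III code of length n with minimum weight d, then d ≤ 3⌊n/12⌋ + 3 (the Mallows–Sloane bound). -/

import Mathlib

/-- The dual code with respect to the standard bilinear form. -/
def dualCode {F : Type*} [Field F] {n : ℕ} (C : Submodule F (Fin n → F)) :
    Submodule F (Fin n → F) where
  carrier := {y | ∀ x ∈ C, ∑ i, x i * y i = 0}
  zero_mem' := by intro x hx; simp
  add_mem' := by
    intro y z hy hz x hx
    simp [Pi.add_apply, mul_add, Finset.sum_add_distrib, hy x hx, hz x hx]
  smul_mem' := by
    intro c y hy x hx
    simp [mul_left_comm, ← Finset.mul_sum, hy x hx]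

/-- The Hamming weight of a vector: the number of nonzero coordinates. -/
def wt {F : Type*} [Zero F] [DecidableEq F] {n : ℕ} (v : Fin n → F) : ℕ :=
  (Finset.univ.filter fun i => v i ≠ 0).card

namespace MS
open PowerSeries

noncomputable section

abbrev QS := PowerSeries ℚ

def sA : QS := 1 - PowerSeries.X
def sB : QS := 1 + 8 * PowerSeries.X
def iA : QS := sA⁻¹
def iB : QS := sB⁻¹

lemma constA : constantCoeff (R := ℚ) sA = 1 := by simp [sA]
lemma constB : constantCoeff (R := ℚ) sB = 1 := by simp [sB]

lemma hA : sA * iA = 1 := PowerSeries.mul_inv_cancel _ (by simp [constA])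
lemma hB : sB * iB = 1 := PowerSeries.mul_inv_cancel _ (by simp [constB])

lemma sA_def : sA = 1 - PowerSeries.X := rfl
lemma sB_def : sB = 1 + 8 * PowerSeries.X := rfl

lemma iA_eq : iA = PowerSeries.mk (fun _ => (1:ℚ)) := by
  symm
  rw [iA, eq_inv_iff_mul_eq_one (by simp [constA])]
  ext n
  cases n with
  | zero => simp [sA, mul_sub, coeff_zero_mul_X]
  | succ n => simp [sA, mul_sub, coeff_succ_mul_X]

lemma coeff_iA (t : ℕ) : coeff (R := ℚ) t iA = 1 := by rw [iA_eq, coeff_mk]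

lemma dA : d⁄dX ℚ sA = -1 := by
  rw [sA, map_sub, derivative_X]
  rw [show (1:QS) = C (R := ℚ) 1 by simp]
  rw [derivative_C]; ring

lemma dB : d⁄dX ℚ sB = 8 := by
  have h8 : (8 : QS) = C (R := ℚ) 8 := (map_ofNat _ _).symm
  rw [sB, map_add, h8, Derivation.leibniz, derivative_X, derivative_C]
  rw [show (1:QS) = C (R := ℚ) 1 by simp, derivative_C]
  simp only [smul_eq_mul, mul_one, mul_zero, zero_mul, add_zero, zero_add, smul_zero, map_one]

lemma diA : d⁄dX ℚ iA = iA ^ 2 := by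
  rw [iA, derivative_inv', ← iA, dA]; ring

lemma sA_ne : sA ≠ 0 := by
  intro h; have := constA; rw [h] at this; simp at this
lemma sB_ne : sB ≠ 0 := by
  intro h; have := constB; rw [h] at this; simp at this

lemma mul_cancel_sA {x y : QS} (h : x * sA = y * sA) : x = y :=
  mul_right_cancel₀ sA_ne h
lemma mul_cancel_sB {x y : QS} (h : x * sB = y * sB) : x = y :=
  mul_right_cancel₀ sB_ne h

lemma c_ofNat (a : ℕ) [a.AtLeastTwo] :
    (OfNat.ofNat a : QS) = C (R := ℚ) (OfNat.ofNat a) := (map_ofNat _ _).symm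

lemma coeff_c_mul (a : ℚ) (f : QS) (i : ℕ) :
    coeff (R := ℚ) i (C (R := ℚ) a * f) = a * coeff (R := ℚ) i f := by rw [coeff_C_mul]

lemma coeff_X_mul (f : QS) (i : ℕ) :
    coeff (R := ℚ) (i+1) (PowerSeries.X * f) = coeff (R := ℚ) i f := by
  rw [mul_comm, coeff_succ_mul_X]

lemma coeff_X_mul_deriv (f : QS) (j : ℕ) :
    coeff (R := ℚ) j (PowerSeries.X * d⁄dX ℚ f) = j * coeff (R := ℚ) j f := by
  cases j with
  | zero => rw [mul_comm]; simp [coeff_zero_mul_X]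
  | succ n =>
      rw [coeff_X_mul, coeff_derivative]
      push_cast; ring

/-- collapse lemma : `sA^p * iA^(p+q) = iA^q` -/
lemma powAB (p q : ℕ) : sA ^ p * iA ^ (p+q) = iA ^ q := by
  rw [pow_add, ← mul_assoc, ← mul_pow, hA, one_pow, one_mul]

def P (j : ℕ) : QS := sB ^ (3*j) * iA ^ (3*j)

def T (j : ℕ) : QS := P j - 27 * (PowerSeries.X * (P j * (iA * iB)))

lemma dP (j : ℕ) (hj : 1 ≤ j) :
    d⁄dX ℚ (P j) = C (R := ℚ) (27*j) * (sB ^ (3*j-1) * iA ^ (3*j+1)) := by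
  obtain ⟨j', hj'⟩ : ∃ j', 3*j = j'+1 := ⟨3*j-1, by omega⟩
  have hsub : 3*j-1 = j' := by omega
  rw [P, hsub, hj', Derivation.leibniz, Derivation.leibniz_pow, Derivation.leibniz_pow,
    dB, diA]
  simp only [smul_eq_mul, nsmul_eq_mul]
  have e1 : iA ^ (j'+1-1) = iA ^ j' := by norm_num
  have e0 : sB ^ (j'+1-1) = sB ^ j' := by norm_num
  have e2 : iA ^ (j'+1+1) = iA ^ j' * iA * iA := by rw [pow_succ, pow_succ]
  have e3 : iA ^ (j'+1) = iA ^ j' * iA := by rw [pow_succ]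
  have e4 : sB ^ (j'+1) = sB ^ j' * sB := by rw [pow_succ]
  have hc : C (R := ℚ) (27*(j:ℚ)) = 27 * ((j:ℕ) : QS) := by
    rw [map_mul, map_natCast, c_ofNat]
  have hcast : ((j'+1 : ℕ) : QS) = 3 * (j : QS) := by
    have : (j' + 1 : ℕ) = 3 * j := hj'.symm
    rw [this]; push_cast; ring
  rw [e0, e1, e2, e3, e4, hc, hcast]
  have h1 : (1 - PowerSeries.X) * iA = 1 := by rw [← sA_def]; exact hA
  rw [sB_def]
  set x := (PowerSeries.X : QS)
  set u := (1+8*x) ^ j'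
  set w := iA ^ j'
  linear_combination (-24*(j:QS)*u*w*iA) * h1

lemma PiAiB (j : ℕ) (hj : 1 ≤ j) :
    P j * (iA * iB) = sB ^ (3*j-1) * iA ^ (3*j+1) := by
  obtain ⟨j', hj'⟩ : ∃ j', 3*j = j'+1 := ⟨3*j-1, by omega⟩
  have hsub : 3*j-1 = j' := by omega
  rw [P, hsub, hj']
  have e2 : iA ^ (j'+1+1) = iA ^ j' * iA * iA := by rw [pow_succ, pow_succ]
  have e3 : iA ^ (j'+1) = iA ^ j' * iA := by rw [pow_succ]
  have e4 : sB ^ (j'+1) = sB ^ j' * sB := by rw [pow_succ]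
  rw [e2, e3, e4]
  set u := sB ^ j'
  set w := iA ^ j'
  linear_combination (u*w*iA*iA) * hB

lemma alpha (j : ℕ) (hj : 1 ≤ j) : coeff (R := ℚ) j (T j) = 0 := by
  have h1 : coeff (R := ℚ) j (PowerSeries.X * d⁄dX ℚ (P j)) = j * coeff (R := ℚ) j (P j) :=
    coeff_X_mul_deriv _ j
  rw [dP j hj, mul_left_comm, coeff_c_mul] at h1
  have hjne : (j : ℚ) ≠ 0 := by
    exact_mod_cast Nat.one_le_iff_ne_zero.mp hj
  have h3 : (27:ℚ) * coeff (R := ℚ) j (PowerSeries.X * (sB ^ (3*j-1) * iA ^ (3*j+1)))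
      = coeff (R := ℚ) j (P j) := by
    have h4 : (j:ℚ) * ((27:ℚ) * coeff (R := ℚ) j (PowerSeries.X * (sB ^ (3*j-1) * iA ^ (3*j+1))))
        = (j:ℚ) * coeff (R := ℚ) j (P j) := by linear_combination h1
    exact mul_left_cancel₀ hjne h4
  rw [T, map_sub, PiAiB j hj, c_ofNat, coeff_c_mul, h3, sub_self]

def Kk (m g : ℕ) : QS := sB ^ g * iA ^ (3*m+3)

def V (m g : ℕ) : QS := Kk m g - 27 * (PowerSeries.X * (Kk m g * (iA * iB)))

lemma dK (m g : ℕ) (hg : 1 ≤ g) :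
    d⁄dX ℚ (Kk m g) = C (R := ℚ) (8*g) * (Kk m g * iB) + C (R := ℚ) (3*m+3) * (Kk m g * iA) := by
  obtain ⟨g', rfl⟩ : ∃ g', g = g'+1 := ⟨g-1, by omega⟩
  rw [Kk, Derivation.leibniz, Derivation.leibniz_pow, Derivation.leibniz_pow, dB, diA]
  simp only [smul_eq_mul, nsmul_eq_mul]
  have e1 : iA ^ (3*m+3-1) = iA ^ (3*m+2) := by norm_num
  have e2 : iA ^ (3*m+3) = iA ^ (3*m+2) * iA := by rw [← pow_succ]
  have e3 : sB ^ (g'+1) = sB ^ g' * sB := by rw [pow_succ]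
  have e4 : sB ^ (g'+1-1) = sB ^ g' := by norm_num
  have hc1 : C (R := ℚ) (8*((g'+1 : ℕ):ℚ)) = 8 * ((g'+1 : ℕ) : QS) := by
    rw [map_mul, map_natCast, c_ofNat]
  have hc2 : C (R := ℚ) (3*(m:ℚ)+3) = ((3*m+3 : ℕ) : QS) := by
    rw [show (3*(m:ℚ)+3) = ((3*m+3:ℕ):ℚ) by push_cast; ring, map_natCast]
  have hc3 : ((3*m+3 : ℕ) : QS) = 3*(m:QS)+3 := by push_cast; ring
  have hc4 : ((3*m+2 : ℕ) : QS) = 3*(m:QS)+2 := by push_cast; ring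

  rw [e1, e2, e3, e4, hc1, hc2, hc3]
  set u := sB ^ g'
  set w := iA ^ (3*m+2)
  linear_combination (-8*((g'+1 : ℕ):QS)*u*w*iA) * hB

lemma K27 (m g : ℕ) :
    27 * (Kk m g * (iA * iB)) = 3 * (Kk m g * iA) + 24 * (Kk m g * iB) := by
  apply mul_cancel_sA; apply mul_cancel_sB
  have h1 : (1 - PowerSeries.X) * iA = 1 := by rw [← sA_def]; exact hA
  have h2 : (1 + 8*PowerSeries.X) * iB = 1 := by rw [← sB_def]; exact hB
  rw [sA_def, sB_def]
  set x := (PowerSeries.X : QS)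
  set k := Kk m g
  linear_combination (k*(27*((1+8*x)*iB) - 3*(1+8*x))) * h1 + (k*(27 - 24*(1-x))) * h2

lemma beta (m N g : ℕ) (hg : 1 ≤ g) (hrel : (g:ℚ) + (N:ℚ) = 3*(m:ℚ)+3) :
    ((m:ℚ)+1) * coeff (R := ℚ) (m+1) (V m g) = -(8*(N:ℚ)) * coeff (R := ℚ) m (Kk m g * iB) := by
  set K := Kk m g
  set p := coeff (R := ℚ) (m+1) K
  set q1 := coeff (R := ℚ) m (K * iA)
  set q2 := coeff (R := ℚ) m (K * iB)
  have c1 : coeff (R := ℚ) (m+1) (PowerSeries.X * d⁄dX ℚ K) = ((m:ℚ)+1) * p := by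
    rw [coeff_X_mul_deriv]; push_cast; ring
  have c2 : coeff (R := ℚ) (m+1) (PowerSeries.X * d⁄dX ℚ K)
      = 8*(g:ℚ) * q2 + (3*(m:ℚ)+3) * q1 := by
    rw [dK m g hg, mul_add, map_add,
      show (PowerSeries.X : QS) * (C (R := ℚ) (8*(g:ℚ)) * (Kk m g * iB))
        = C (R := ℚ) (8*(g:ℚ)) * (PowerSeries.X * (Kk m g * iB)) from by ring,
      show (PowerSeries.X : QS) * (C (R := ℚ) (3*(m:ℚ)+3) * (Kk m g * iA))
        = C (R := ℚ) (3*(m:ℚ)+3) * (PowerSeries.X * (Kk m g * iA)) from by ring,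
      coeff_c_mul, coeff_c_mul, coeff_X_mul, coeff_X_mul]
  have c12 : ((m:ℚ)+1) * p = 8*(g:ℚ) * q2 + (3*(m:ℚ)+3) * q1 := by
    rw [← c1, c2]
  have c3 : coeff (R := ℚ) (m+1) (V m g) = p - (3 * q1 + 24 * q2) := by
    rw [V, map_sub]
    have h27 : (27 : QS) * (PowerSeries.X * (K * (iA*iB)))
        = C (R := ℚ) 27 * (PowerSeries.X * (K * (iA*iB))) := by rw [c_ofNat]
    rw [h27, coeff_c_mul, coeff_X_mul]
    have c4 : (27:ℚ) * coeff (R := ℚ) m (K * (iA*iB)) = 3 * q1 + 24 * q2 := by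
      have := congrArg (coeff (R := ℚ) m) (K27 m g)
      rw [map_add, c_ofNat 27, c_ofNat 3, c_ofNat 24, coeff_c_mul, coeff_c_mul,
        coeff_c_mul] at this
      exact this
    linarith [c4]
  rw [c3]
  linear_combination c12 + 8*q2*hrel

def NN (f : QS) : Prop := ∀ t, 0 ≤ coeff (R := ℚ) t f

lemma NN_mul {f g : QS} (hf : NN f) (hg : NN g) : NN (f*g) := by
  intro t
  rw [coeff_mul]
  exact Finset.sum_nonneg fun p _ => mul_nonneg (hf _) (hg _)

lemma NN_one : NN 1 := by
  intro t; rw [coeff_one]; positivity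

lemma NN_pow {f : QS} (hf : NN f) (e : ℕ) : NN (f^e) := by
  induction e with
  | zero => simpa using NN_one
  | succ e ih => rw [pow_succ]; exact NN_mul ih hf

lemma NN_iA : NN iA := fun t => by rw [coeff_iA]; norm_num

lemma NN_sB : NN sB := by
  intro t
  rw [sB_def, map_add, c_ofNat 8, coeff_c_mul, coeff_one, coeff_X]
  split_ifs <;> norm_num

lemma pos_mul {f g : QS} (hf : NN f) (h0 : 0 < coeff (R := ℚ) 0 f) (hg : NN g) {t : ℕ}
    (ht : 0 < coeff (R := ℚ) t g) : 0 < coeff (R := ℚ) t (f*g) := by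
  rw [coeff_mul]
  apply Finset.sum_pos' (fun p _ => mul_nonneg (hf _) (hg _))
  exact ⟨(0, t), by simp [Finset.mem_antidiagonal], mul_pos h0 ht⟩

lemma coeff0_pow {f : QS} (h : coeff (R := ℚ) 0 f = 1) (e : ℕ) : coeff (R := ℚ) 0 (f^e) = 1 := by
  have := congrArg (constantCoeff (R := ℚ)) (rfl : f^e = f^e)
  rw [coeff_zero_eq_constantCoeff] at h ⊢
  rw [map_pow, h, one_pow]

lemma pos_iA_pow (e : ℕ) (he : 1 ≤ e) (t : ℕ) : 0 < coeff (R := ℚ) t (iA^e) := by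
  induction e with
  | zero => omega
  | succ e ih =>
      rcases Nat.eq_or_lt_of_le he with h|h
      · rw [← h, pow_one, coeff_iA]; norm_num
      · have h1 : 1 ≤ e := by omega
        rw [pow_succ, mul_comm]
        exact pos_mul NN_iA (by rw [coeff_iA]; norm_num) (NN_pow NN_iA e) (ih h1)

lemma KiB (m g : ℕ) (hg : 1 ≤ g) : Kk m g * iB = sB^(g-1) * iA^(3*m+3) := by
  obtain ⟨g', rfl⟩ : ∃ g', g = g'+1 := ⟨g-1, by omega⟩
  have e4 : g'+1-1 = g' := by norm_num
  rw [Kk, e4, pow_succ]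
  linear_combination (sB^g' * iA^(3*m+3)) * hB

lemma pos_KiB (m g : ℕ) (hg : 1 ≤ g) : 0 < coeff (R := ℚ) m (Kk m g * iB) := by
  rw [KiB m g hg]
  exact pos_mul (NN_pow NN_sB _) (by rw [coeff0_pow (by rw [sB_def]; simp)]; norm_num)
    (NN_pow NN_iA _) (pos_iA_pow _ (by omega) m)

theorem PS_contra (m N : ℕ) (hN1 : 1 ≤ N) (h3m : 3*m ≤ N) (hN2 : N ≤ 3*m+2) (c : ℕ → ℚ)
    (hE : ∀ j, j ≤ m+1 → coeff (R := ℚ) j (∑ i ∈ Finset.range (m+1),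
      C (R := ℚ) (c i) * (sB^(N-3*i) * PowerSeries.X^i * sA^(3*i))) = if j = 0 then 1 else 0) :
    False := by
  set g := 3*m+3 - N with hgdef
  have hg : 1 ≤ g := by omega
  have hrel : (g:ℚ) + (N:ℚ) = 3*(m:ℚ)+3 := by
    have : g + N = 3*m+3 := by omega
    have := congrArg (fun x : ℕ => (x:ℚ)) this
    push_cast at this; linarith
  set E := ∑ i ∈ Finset.range (m+1),
      C (R := ℚ) (c i) * (sB^(N-3*i) * PowerSeries.X^i * sA^(3*i)) with hEdef
  -- way 2 : coeff (m+1) (E * V) = coeff (m+1) V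
  have way2 : coeff (R := ℚ) (m+1) (E * V m g) = coeff (R := ℚ) (m+1) (V m g) := by
    rw [coeff_mul]
    rw [Finset.sum_eq_single ((0 : ℕ), m+1)]
    · rw [hE 0 (by omega)]; simp
    · rintro ⟨u, v⟩ hmem hne
      rw [Finset.HasAntidiagonal.mem_antidiagonal] at hmem
      have hu : u ≠ 0 := by
        intro h
        apply hne
        subst h
        have h2 : v = m + 1 := by simpa using hmem
        rw [h2]
      have := hE u (by omega)
      rw [if_neg hu] at this
      simp only [this, zero_mul]
    · intro h
      exact absurd (Finset.HasAntidiagonal.mem_antidiagonal.mpr (by omega)) h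
  -- way 1 : coeff (m+1) (E * V) = 0
  have HiV : ∀ i, i ≤ m → (sB^(N-3*i) * PowerSeries.X^i * sA^(3*i)) * V m g
      = PowerSeries.X^i * T (m+1-i) := by
    intro i hi
    have HiK : (sB^(N-3*i) * PowerSeries.X^i * sA^(3*i)) * Kk m g
        = PowerSeries.X^i * P (m+1-i) := by
      rw [Kk, P]
      have hB' : sB^(N-3*i) * sB^g = sB^(3*(m+1-i)) := by
        rw [← pow_add]; congr 1; omega
      have hA' : sA^(3*i) * iA^(3*m+3) = iA^(3*(m+1-i)) := by
        have h1 : 3*m+3 = 3*i + 3*(m+1-i) := by omega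
        rw [h1]; exact powAB _ _
      calc (sB^(N-3*i) * PowerSeries.X^i * sA^(3*i)) * (sB^g * iA^(3*m+3))
          = PowerSeries.X^i * ((sB^(N-3*i) * sB^g) * (sA^(3*i) * iA^(3*m+3))) := by ring
        _ = PowerSeries.X^i * (sB^(3*(m+1-i)) * iA^(3*(m+1-i))) := by rw [hB', hA']
    rw [V, T, mul_sub]
    rw [show (sB^(N-3*i) * PowerSeries.X^i * sA^(3*i)) *
        (27 * (PowerSeries.X * (Kk m g * (iA * iB))))
      = 27 * (PowerSeries.X * (((sB^(N-3*i) * PowerSeries.X^i * sA^(3*i)) * Kk m g) * (iA * iB)))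
      from by ring]
    rw [HiK, mul_sub]
    ring
  have way1 : coeff (R := ℚ) (m+1) (E * V m g) = 0 := by
    rw [hEdef, Finset.sum_mul, map_sum]
    apply Finset.sum_eq_zero
    intro i hi
    have him : i ≤ m := by
      have := Finset.mem_range.mp hi; omega
    rw [mul_assoc, coeff_c_mul, HiV i him, coeff_X_pow_mul', if_pos (by omega : i ≤ m+1),
      alpha (m+1-i) (by omega), mul_zero]
  have hV0 : coeff (R := ℚ) (m+1) (V m g) = 0 := by rw [← way2, way1]
  have hbeta := beta m N g hg hrel
  rw [hV0, mul_zero] at hbeta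
  have hpos := pos_KiB m g hg
  have : (0:ℚ) < 8*(N:ℚ) := by positivity
  nlinarith


def ω : ℂ := Complex.exp (2 * Real.pi * Complex.I / 3)

lemma hω_prim : IsPrimitiveRoot ω 3 := Complex.isPrimitiveRoot_exp 3 (by norm_num)
lemma hω3 : ω^3 = 1 := hω_prim.pow_eq_one
lemma hω1 : ω ≠ 1 := hω_prim.ne_one (by norm_num)
lemma hω0 : ω ≠ 0 := fun h => by
  have := hω3; rw [h] at this; norm_num at this
lemma hsum : ω^2 + ω + 1 = 0 := by
  have h : (ω - 1) * (ω^2 + ω + 1) = 0 := by linear_combination hω3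
  rcases mul_eq_zero.mp h with h'|h'
  · exact absurd (by linear_combination h' : ω = 1) hω1
  · exact h'
lemma hω2ne1 : ω^2 ≠ 1 := by
  intro h
  exact hω1 (by linear_combination hω3 - ω*h)
lemma hω2neω : ω^2 ≠ ω := by
  intro h
  exact hω1 (mul_left_cancel₀ hω0 (by rw [mul_one]; linear_combination h))
lemma hω2ne0 : ω^2 ≠ 0 := pow_ne_zero 2 hω0

def ψ (a : ZMod 3) : ℂ := ω ^ a.val

lemma ψ_zero : ψ 0 = 1 := by
  rw [ψ, show (0 : ZMod 3).val = 0 from rfl, pow_zero]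

lemma ψ_one : ψ 1 = ω := by
  rw [ψ, show (1 : ZMod 3).val = 1 from by decide, pow_one]

lemma ψ_two : ψ 2 = ω^2 := by
  rw [ψ, show (2 : ZMod 3).val = 2 from by decide]

lemma ω_pow_mod (x : ℕ) : ω ^ (x % 3) = ω ^ x := by
  conv_rhs => rw [show x = 3*(x/3) + x % 3 from by omega]
  rw [pow_add, pow_mul, hω3, one_pow, one_mul]

lemma ψ_add (a b : ZMod 3) : ψ (a+b) = ψ a * ψ b := by
  rw [ψ, ψ, ψ, ZMod.val_add, ω_pow_mod, pow_add]

lemma ψ_sum {ι : Type*} [DecidableEq ι] (s : Finset ι) (f : ι → ZMod 3) :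
    ψ (∑ i ∈ s, f i) = ∏ i ∈ s, ψ (f i) := by
  induction s using Finset.induction_on with
  | empty => simp [ψ_zero]
  | @insert a s' hx ih =>
      rw [Finset.sum_insert hx, Finset.prod_insert hx, ψ_add, ih]

lemma ψ_ne_one {c : ZMod 3} (h : c ≠ 0) : ψ c ≠ 1 := by
  have : c = 1 ∨ c = 2 := by revert c; decide
  rcases this with rfl|rfl
  · rw [ψ_one]; exact hω1
  · rw [ψ_two]; exact hω2ne1

lemma sum3 (f : ZMod 3 → ℂ) : ∑ a : ZMod 3, f a = f 0 + f 1 + f 2 := by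
  have huniv : (Finset.univ : Finset (ZMod 3)) = {0, 1, 2} := by decide
  rw [huniv, Finset.sum_insert (by decide), Finset.sum_insert (by decide),
    Finset.sum_singleton]
  ring

lemma coord_sum (x y : ℂ) (u : ZMod 3) :
    ∑ a : ZMod 3, ψ (u*a) * (if a = 0 then x else y)
      = if u = 0 then x + 2*y else x - y := by
  have hu : u = 0 ∨ u = 1 ∨ u = 2 := by revert u; decide
  rcases hu with rfl|rfl|rfl
  · rw [sum3]
    simp only [show ((0:ZMod 3)*0 : ZMod 3) = 0 from by decide,
      show ((0:ZMod 3)*1 : ZMod 3) = 0 from by decide,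
      show ((0:ZMod 3)*2 : ZMod 3) = 0 from by decide, ψ_zero,
      if_pos rfl, if_neg (show (1:ZMod 3) ≠ 0 from by decide),
      if_neg (show (2:ZMod 3) ≠ 0 from by decide), if_true, eq_self_iff_true]
    ring
  · rw [sum3]
    simp only [show ((1:ZMod 3)*0 : ZMod 3) = 0 from by decide,
      show ((1:ZMod 3)*1 : ZMod 3) = 1 from by decide,
      show ((1:ZMod 3)*2 : ZMod 3) = 2 from by decide, ψ_zero, ψ_one, ψ_two,
      if_pos rfl, if_neg (show (1:ZMod 3) ≠ 0 from by decide),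
      if_neg (show (2:ZMod 3) ≠ 0 from by decide),
      if_neg (show (1:ZMod 3) ≠ 0 from by decide), if_true, eq_self_iff_true]
    linear_combination y * hsum
  · rw [sum3]
    simp only [show ((2:ZMod 3)*0 : ZMod 3) = 0 from by decide,
      show ((2:ZMod 3)*1 : ZMod 3) = 2 from by decide,
      show ((2:ZMod 3)*2 : ZMod 3) = 1 from by decide, ψ_zero, ψ_one, ψ_two,
      if_pos rfl, if_neg (show (1:ZMod 3) ≠ 0 from by decide),
      if_neg (show (2:ZMod 3) ≠ 0 from by decide), if_true, eq_self_iff_true]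
    linear_combination y * hsum

-- weight lemmas
lemma wt_le {n : ℕ} (v : Fin n → ZMod 3) : wt v ≤ n := by
  rw [wt]
  calc (Finset.univ.filter fun i => v i ≠ 0).card ≤ (Finset.univ : Finset (Fin n)).card :=
        Finset.card_filter_le _ _
    _ = n := by simp

lemma wt_eq_zero_iff {n : ℕ} (v : Fin n → ZMod 3) : wt v = 0 ↔ v = 0 := by
  rw [wt, Finset.card_eq_zero, Finset.filter_eq_empty_iff]
  constructor
  · intro h; funext i
    have := h (Finset.mem_univ i)
    simpa using this
  · intro h i _
    simp [h]

lemma prod_ite_wt {n : ℕ} (x y : ℂ) (v : Fin n → ZMod 3) :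
    ∏ i : Fin n, (if v i = 0 then x else y) = x^(n - wt v) * y^(wt v) := by
  rw [Finset.prod_ite, Finset.prod_const, Finset.prod_const, wt]
  have h1 : (Finset.univ.filter fun i => v i = 0).card
      + (Finset.univ.filter fun i => ¬ v i = 0).card = n := by
    rw [Finset.card_filter_add_card_filter_not]
    simp
  have h2 : (Finset.univ.filter fun i => ¬ v i = 0).card
      = (Finset.univ.filter fun i => v i ≠ 0).card := rfl
  rw [← h2]
  congr 2
  omega

section Code

open scoped Classical

variable {n : ℕ} (Cc : Submodule (ZMod 3) (Fin n → ZMod 3))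

def CS : Finset (Fin n → ZMod 3) :=
  Finset.univ.filter (· ∈ Cc)

lemma mem_CS {v : Fin n → ZMod 3} : v ∈ CS Cc ↔ v ∈ Cc := by
  rw [CS, Finset.mem_filter]
  simp

def Qf (x y : ℂ) : ℂ := ∑ v ∈ CS Cc, x^(n - wt v) * y^(wt v)

lemma char_sum (v : Fin n → ZMod 3) :
    ∑ u ∈ CS Cc, ψ (∑ i, u i * v i)
      = if (∀ x ∈ Cc, ∑ i, x i * v i = 0) then (((CS Cc).card : ℂ)) else 0 := by
  split_ifs with hmem
  · rw [Finset.sum_congr rfl (fun u hu => by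
      rw [hmem u ((mem_CS Cc).mp hu), ψ_zero])]
    rw [Finset.sum_const, nsmul_eq_mul, mul_one]
  · push_neg at hmem
    obtain ⟨x₀, hx₀C, hx₀⟩ := hmem
    set T := ∑ u ∈ CS Cc, ψ (∑ i, u i * v i) with hT
    have key : T = ψ (∑ i, x₀ i * v i) * T := by
      rw [hT, Finset.mul_sum]
      have reindex : ∑ u ∈ CS Cc, ψ (∑ i, u i * v i)
          = ∑ u ∈ CS Cc, ψ (∑ i, (u + x₀) i * v i) := by
        apply Finset.sum_nbij' (fun u => u - x₀) (fun u => u + x₀)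
        · intro a ha
          rw [mem_CS] at ha ⊢
          exact Cc.sub_mem ha hx₀C
        · intro a ha
          rw [mem_CS] at ha ⊢
          exact Cc.add_mem ha hx₀C
        · intro a _; simp
        · intro a _; simp
        · intro a _
          congr 1
          apply Finset.sum_congr rfl
          intro i _
          simp [Pi.sub_apply, Pi.add_apply]
      rw [reindex]
      apply Finset.sum_congr rfl
      intro u _
      rw [← ψ_add]
      congr 1
      rw [← Finset.sum_add_distrib]
      apply Finset.sum_congr rfl
      intro i _
      simp [Pi.add_apply, add_mul]
      ring
    have h2 : (ψ (∑ i, x₀ i * v i) - 1) * T = 0 := by linear_combination -key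
    rcases mul_eq_zero.mp h2 with h'|h'
    · exact absurd (by linear_combination h') (ψ_ne_one hx₀)
    · exact h'

lemma row_sum (x y : ℂ) (u : Fin n → ZMod 3) :
    ∑ v : Fin n → ZMod 3, ψ (∑ i, u i * v i) * (x^(n - wt v) * y^(wt v))
      = (x+2*y)^(n - wt u) * (x-y)^(wt u) := by
  have h1 : ∀ v : Fin n → ZMod 3, ψ (∑ i, u i * v i) * (x^(n-wt v)*y^(wt v))
      = ∏ i, (ψ (u i * v i) * if v i = 0 then x else y) := by
    intro v
    rw [ψ_sum, ← prod_ite_wt x y v, ← Finset.prod_mul_distrib]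
  rw [Finset.sum_congr rfl (fun v _ => h1 v)]
  rw [← prod_ite_wt (x+2*y) (x-y) u]
  have h2 : ∀ i, (if u i = 0 then x+2*y else x-y)
      = ∑ a : ZMod 3, ψ (u i * a) * (if a = 0 then x else y) :=
    fun i => (coord_sum x y (u i)).symm
  rw [Finset.prod_congr rfl (fun i _ => h2 i), Finset.prod_univ_sum]
  rw [Fintype.piFinset_univ]

lemma MW (hsd : Cc = dualCode Cc) (x y : ℂ) :
    Qf Cc (x+2*y) (x-y) = ((CS Cc).card : ℂ) * Qf Cc x y := by
  have hdual : ∀ v : Fin n → ZMod 3, (∀ x ∈ Cc, ∑ i, x i * v i = 0) ↔ v ∈ Cc := by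
    intro v
    constructor
    · intro h
      rw [hsd]
      exact h
    · intro h x hx
      rw [hsd] at h
      exact h x hx
  calc Qf Cc (x+2*y) (x-y)
      = ∑ u ∈ CS Cc, (x+2*y)^(n - wt u) * (x-y)^(wt u) := rfl
    _ = ∑ u ∈ CS Cc, ∑ v : Fin n → ZMod 3,
          ψ (∑ i, u i * v i) * (x^(n - wt v) * y^(wt v)) := by
        exact Finset.sum_congr rfl (fun u _ => (row_sum x y u).symm)
    _ = ∑ v : Fin n → ZMod 3, ∑ u ∈ CS Cc,
          ψ (∑ i, u i * v i) * (x^(n - wt v) * y^(wt v)) := Finset.sum_comm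
    _ = ∑ v : Fin n → ZMod 3,
          (if (∀ x ∈ Cc, ∑ i, x i * v i = 0) then (((CS Cc).card : ℂ)) else 0)
            * (x^(n - wt v) * y^(wt v)) := by
        apply Finset.sum_congr rfl
        intro v _
        rw [← Finset.sum_mul, char_sum]
    _ = ∑ v : Fin n → ZMod 3,
          (if v ∈ CS Cc then ((CS Cc).card : ℂ) * (x^(n - wt v) * y^(wt v)) else 0) := by
        apply Finset.sum_congr rfl
        intro v _
        by_cases h : v ∈ Cc
        · rw [if_pos ((hdual v).mpr h), if_pos ((mem_CS Cc).mpr h)]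
        · rw [if_neg (fun hh => h ((hdual v).mp hh)), if_neg (fun hh => h ((mem_CS Cc).mp hh)),
            zero_mul]
    _ = ∑ v ∈ CS Cc, ((CS Cc).card : ℂ) * (x^(n - wt v) * y^(wt v)) := by
        simp only [Finset.sum_ite_mem, Finset.univ_inter]
    _ = ((CS Cc).card : ℂ) * Qf Cc x y := by rw [Qf, Finset.mul_sum]

lemma zero_mem_CS : 0 ∈ CS Cc := (mem_CS Cc).mpr Cc.zero_mem

lemma card_CS_pos : 0 < (CS Cc).card := Finset.card_pos.mpr ⟨0, zero_mem_CS Cc⟩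

lemma Qf_diag (t : ℂ) : Qf Cc t t = ((CS Cc).card : ℂ) * t^n := by
  rw [Qf]
  have h : ∀ v ∈ CS Cc, t^(n - wt v) * t^(wt v) = t^n := by
    intro v _
    rw [← pow_add]
    congr 1
    have := wt_le v
    omega
  rw [Finset.sum_congr rfl h, Finset.sum_const, nsmul_eq_mul]

lemma Qf_x_zero (x : ℂ) : Qf Cc x 0 = x^n := by
  rw [Qf, Finset.sum_eq_single 0]
  · rw [show wt (0 : Fin n → ZMod 3) = 0 from (wt_eq_zero_iff 0).mpr rfl]
    norm_num
  · intro v _ hv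
    have : wt v ≠ 0 := fun h => hv ((wt_eq_zero_iff v).mp h)
    rw [zero_pow this, mul_zero]
  · intro h
    exact absurd (zero_mem_CS Cc) h

lemma wt_mod_three (hsd : Cc = dualCode Cc) (v : Fin n → ZMod 3) (hv : v ∈ Cc) :
    3 ∣ wt v := by
  have hvd : v ∈ dualCode Cc := hsd ▸ hv
  have h0 : ∑ i, v i * v i = 0 := hvd v hv
  have hsq : ∀ a : ZMod 3, a * a = if a ≠ 0 then 1 else 0 := by decide
  rw [Finset.sum_congr rfl (fun i _ => hsq (v i))] at h0
  rw [Finset.sum_ite, Finset.sum_const, Finset.sum_const] at h0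
  have : ((wt v : ℕ) : ZMod 3) = 0 := by
    rw [wt]
    simpa using h0
  exact (ZMod.natCast_eq_zero_iff _ 3).mp this

lemma card_sq (hsd : Cc = dualCode Cc) : (CS Cc).card ^ 2 = 3 ^ n := by
  have h := MW Cc hsd 1 1
  rw [show (1:ℂ)+2*1 = 3 by norm_num, show (1:ℂ)-1 = 0 by norm_num, Qf_x_zero,
    Qf_diag, one_pow, mul_one] at h
  have : ((3^n : ℕ) : ℂ) = (((CS Cc).card^2 : ℕ) : ℂ) := by push_cast; rw [h]; ring
  exact_mod_cast this.symm

lemma card_eq_pow (hsd : Cc = dualCode Cc) :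
    ∃ k, n = 2*k ∧ (CS Cc).card = 3^k := by
  have hsq := card_sq Cc hsd
  have hdvd : (CS Cc).card ∣ 3^n := ⟨(CS Cc).card, by rw [← hsq]; ring⟩
  obtain ⟨k, hk, hcard⟩ := (Nat.dvd_prime_pow Nat.prime_three).mp hdvd
  refine ⟨k, ?_, hcard⟩
  rw [hcard, ← pow_mul] at hsq
  have := Nat.pow_right_injective (le_refl 2)
  have h2 : (3:ℕ)^(k*2) = 3^n := hsq
  have := Nat.pow_right_injective (by norm_num : 2 ≤ 3) h2
  omega

def qpoly : Polynomial ℂ := ∑ v ∈ CS Cc, (Polynomial.X : Polynomial ℂ)^(wt v)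

lemma qpoly_coeff (w : ℕ) :
    (qpoly Cc).coeff w = (((CS Cc).filter (fun v => wt v = w)).card : ℂ) := by
  rw [qpoly, Polynomial.finset_sum_coeff]
  have h : ∀ v ∈ CS Cc, ((Polynomial.X : Polynomial ℂ)^(wt v)).coeff w
      = if wt v = w then 1 else 0 := by
    intro v _
    rw [Polynomial.coeff_X_pow]
    simp [eq_comm]
  rw [Finset.sum_congr rfl h, Finset.sum_boole]

lemma qpoly_eval (t : ℂ) : (qpoly Cc).eval t = Qf Cc 1 t := by
  rw [qpoly, Polynomial.eval_finset_sum, Qf]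
  apply Finset.sum_congr rfl
  intro v _
  simp

lemma qpoly_natDegree_le : (qpoly Cc).natDegree ≤ n := by
  rw [qpoly]
  apply Polynomial.natDegree_sum_le_of_forall_le
  intro v _
  calc ((Polynomial.X : Polynomial ℂ)^(wt v)).natDegree ≤ wt v := by
        simp [Polynomial.natDegree_X_pow]
    _ ≤ n := wt_le v

lemma sum_wt_fiber (F : ℕ → ℂ) :
    ∑ w ∈ Finset.range (n+1), (((CS Cc).filter (fun v => wt v = w)).card : ℂ) * F w
      = ∑ v ∈ CS Cc, F (wt v) := by
  rw [← Finset.sum_fiberwise_of_maps_to (g := fun v => wt v) (t := Finset.range (n+1))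
    (fun v _ => Finset.mem_range.mpr (by show wt v < n+1; have := wt_le v; omega)) (fun v => F (wt v))]
  apply Finset.sum_congr rfl
  intro w _
  have h : ∀ v ∈ (CS Cc).filter (fun v => wt v = w), F (wt v) = F w := by
    intro v hv
    rw [(Finset.mem_filter.mp hv).2]
  rw [Finset.sum_congr rfl h, Finset.sum_const, nsmul_eq_mul]

def StrP (N : ℕ) (h : Polynomial ℂ) : Polynomial ℂ :=
  ∑ w ∈ Finset.range (N+1), Polynomial.C (h.coeff w)
    * ((1+2*Polynomial.X)^(N-w) * (1-Polynomial.X)^w)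

lemma Str_eval (N : ℕ) (h : Polynomial ℂ) (t : ℂ) :
    (StrP N h).eval t = ∑ w ∈ Finset.range (N+1),
      h.coeff w * ((1+2*t)^(N-w) * (1-t)^w) := by
  rw [StrP, Polynomial.eval_finset_sum]
  apply Finset.sum_congr rfl
  intro w _
  simp

lemma Str_q (hsd : Cc = dualCode Cc) :
    StrP n (qpoly Cc) = Polynomial.C ((CS Cc).card : ℂ) * qpoly Cc := by
  apply Polynomial.funext
  intro t
  rw [Str_eval]
  have h1 : ∀ w ∈ Finset.range (n+1), (qpoly Cc).coeff w * ((1+2*t)^(n-w) * (1-t)^w)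
      = (((CS Cc).filter (fun v => wt v = w)).card : ℂ) * ((1+2*t)^(n-w) * (1-t)^w) := by
    intro w _
    rw [qpoly_coeff]
  rw [Finset.sum_congr rfl h1, sum_wt_fiber]
  have h2 : ∑ v ∈ CS Cc, (1+2*t)^(n - wt v) * (1-t)^(wt v) = Qf Cc (1+2*t) (1-t) := rfl
  rw [h2, MW Cc hsd 1 t, Polynomial.eval_mul, Polynomial.eval_C, qpoly_eval]

lemma Str_eval_comp (N : ℕ) (h : Polynomial ℂ) (hdeg : h.natDegree ≤ N) (t : ℂ)
    (ht : (1+2*t) ≠ 0) :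
    (StrP N h).eval t = (1+2*t)^N * h.eval ((1-t)/(1+2*t)) := by
  rw [Str_eval, Polynomial.eval_eq_sum_range' (lt_of_le_of_lt hdeg (Nat.lt_succ_self N)),
    Finset.mul_sum]
  apply Finset.sum_congr rfl
  intro w hw
  have hwn : w ≤ N := by have := Finset.mem_range.mp hw; omega
  have hsplit : (1+2*t)^N = (1+2*t)^(N-w) * (1+2*t)^w := by
    rw [← pow_add]
    congr 1
    omega
  rw [div_pow, hsplit]
  field_simp

lemma Str_sum {ι : Type*} (N : ℕ) (s : Finset ι) (a : ι → ℂ) (F : ι → Polynomial ℂ) :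
    StrP N (∑ i ∈ s, Polynomial.C (a i) * F i)
      = ∑ i ∈ s, Polynomial.C (a i) * StrP N (F i) := by
  unfold StrP
  calc (∑ w ∈ Finset.range (N+1), Polynomial.C ((∑ i ∈ s, Polynomial.C (a i) * F i).coeff w)
        * ((1+2*Polynomial.X)^(N-w) * (1-Polynomial.X)^w))
      = ∑ w ∈ Finset.range (N+1), ∑ i ∈ s, Polynomial.C (a i)
          * (Polynomial.C ((F i).coeff w) * ((1+2*Polynomial.X)^(N-w) * (1-Polynomial.X)^w)) := by
        apply Finset.sum_congr rfl
        intro w _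
        rw [Polynomial.finset_sum_coeff]
        simp_rw [Polynomial.coeff_C_mul]
        rw [map_sum, Finset.sum_mul]
        apply Finset.sum_congr rfl
        intro i _
        rw [map_mul]
        ring
    _ = ∑ i ∈ s, ∑ w ∈ Finset.range (N+1), Polynomial.C (a i)
          * (Polynomial.C ((F i).coeff w) * ((1+2*Polynomial.X)^(N-w) * (1-Polynomial.X)^w)) :=
        Finset.sum_comm
    _ = ∑ i ∈ s, Polynomial.C (a i) * ∑ w ∈ Finset.range (N+1),
          Polynomial.C ((F i).coeff w) * ((1+2*Polynomial.X)^(N-w) * (1-Polynomial.X)^w) := by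
        apply Finset.sum_congr rfl
        intro i _
        rw [Finset.mul_sum]

lemma Str_sub (N : ℕ) (p q : Polynomial ℂ) :
    StrP N (p - q) = StrP N p - StrP N q := by
  unfold StrP
  rw [← Finset.sum_sub_distrib]
  apply Finset.sum_congr rfl
  intro w _
  rw [Polynomial.coeff_sub, map_sub]
  ring

lemma comp_omega_fixed (p : Polynomial ℂ) (h : ∀ w, ¬ (3 ∣ w) → p.coeff w = 0) :
    p.comp (Polynomial.C ω * Polynomial.X) = p := by
  rw [Polynomial.comp_eq_sum_left]
  conv_rhs => rw [← Polynomial.sum_C_mul_X_pow_eq p]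
  rw [Polynomial.sum_def, Polynomial.sum_def]
  apply Finset.sum_congr rfl
  intro w hw
  have h3 : 3 ∣ w := by
    by_contra hc
    exact (Polynomial.mem_support_iff.mp hw) (h w hc)
  obtain ⟨e, rfl⟩ := h3
  rw [mul_pow, ← map_pow, pow_mul, hω3, one_pow, map_one, one_mul]

lemma zero_count {p : Polynomial ℂ} (m : ℕ) (hdeg : p.natDegree ≤ n) (hn : n < 12*(m+1))
    (h0 : (Polynomial.X : Polynomial ℂ)^(3*m+3) ∣ p)
    (h1 : ((1:Polynomial ℂ) - Polynomial.X)^(3*m+3) ∣ p)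
    (hfix : p.comp (Polynomial.C ω * Polynomial.X) = p) : p = 0 := by
  by_contra hp
  set e := 3*m+3 with he
  have comp_dvd : ∀ q r : Polynomial ℂ, q ∣ r →
      q.comp (Polynomial.C ω * Polynomial.X) ∣ r.comp (Polynomial.C ω * Polynomial.X) := by
    rintro q r ⟨c, rfl⟩
    exact ⟨c.comp _, by rw [Polynomial.mul_comp]⟩
  have h2 : ((1:Polynomial ℂ) - Polynomial.C ω * Polynomial.X)^e ∣ p := by
    have := comp_dvd _ _ h1
    rw [hfix] at this
    simpa [Polynomial.pow_comp, Polynomial.sub_comp, Polynomial.one_comp] using this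
  have h3 : ((1:Polynomial ℂ) - Polynomial.C (ω^2) * Polynomial.X)^e ∣ p := by
    have := comp_dvd _ _ h2
    rw [hfix] at this
    have heq : (((1:Polynomial ℂ) - Polynomial.C ω * Polynomial.X)^e).comp
        (Polynomial.C ω * Polynomial.X)
        = ((1:Polynomial ℂ) - Polynomial.C (ω^2) * Polynomial.X)^e := by
      rw [Polynomial.pow_comp]
      congr 1
      rw [Polynomial.sub_comp, Polynomial.one_comp, Polynomial.mul_comp,
        Polynomial.C_comp, Polynomial.X_comp, ← mul_assoc, ← map_mul,
        show ω * ω = ω^2 from (sq ω).symm]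
    rwa [heq] at this
  -- convert to (X - C r) form
  have f0 : ((Polynomial.X : Polynomial ℂ) - Polynomial.C 0)^e ∣ p := by simpa using h0
  have f1 : ((Polynomial.X : Polynomial ℂ) - Polynomial.C 1)^e ∣ p := by
    refine dvd_trans ⟨(-1)^e, ?_⟩ h1
    rw [← mul_pow]
    congr 1
    rw [Polynomial.C_1]
    ring
  have f2 : ((Polynomial.X : Polynomial ℂ) - Polynomial.C (ω^2))^e ∣ p := by
    refine dvd_trans ⟨(-(Polynomial.C ω))^e, ?_⟩ h2
    rw [← mul_pow]
    congr 1
    have : Polynomial.C ω * Polynomial.C (ω^2) = 1 := by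
      rw [← map_mul, ← pow_succ']
      rw [hω3, map_one]
    linear_combination -this
  have f3 : ((Polynomial.X : Polynomial ℂ) - Polynomial.C ω)^e ∣ p := by
    refine dvd_trans ⟨(-(Polynomial.C (ω^2)))^e, ?_⟩ h3
    rw [← mul_pow]
    congr 1
    have : Polynomial.C (ω^2) * Polynomial.C ω = 1 := by
      rw [← map_mul, ← pow_succ]
      rw [hω3, map_one]
    linear_combination -this
  have cop : ∀ {a b : ℂ}, a ≠ b →
      IsCoprime ((Polynomial.X - Polynomial.C a)^e) ((Polynomial.X - Polynomial.C b)^e) := by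
    intro a b hne
    exact (Polynomial.isCoprime_X_sub_C_of_isUnit_sub (sub_ne_zero.mpr hne).isUnit).pow
  have ne01 : (0:ℂ) ≠ 1 := by norm_num
  have ne0ω2 : (0:ℂ) ≠ ω^2 := (Ne.symm hω2ne0)
  have ne0ω : (0:ℂ) ≠ ω := (Ne.symm hω0)
  have ne1ω2 : (1:ℂ) ≠ ω^2 := (Ne.symm hω2ne1)
  have ne1ω : (1:ℂ) ≠ ω := (Ne.symm hω1)
  have d23 : (Polynomial.X - Polynomial.C (ω^2))^e * (Polynomial.X - Polynomial.C ω)^e ∣ p :=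
    (cop hω2neω).mul_dvd f2 f3
  have d123 : (Polynomial.X - Polynomial.C 1)^e *
      ((Polynomial.X - Polynomial.C (ω^2))^e * (Polynomial.X - Polynomial.C ω)^e) ∣ p :=
    ((cop ne1ω2).mul_right (cop ne1ω)).mul_dvd f1 d23
  have dall : (Polynomial.X - Polynomial.C 0)^e * ((Polynomial.X - Polynomial.C 1)^e *
      ((Polynomial.X - Polynomial.C (ω^2))^e * (Polynomial.X - Polynomial.C ω)^e)) ∣ p :=
    ((cop ne01).mul_right ((cop ne0ω2).mul_right (cop ne0ω))).mul_dvd f0 d123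
  have hXsub_ne : ∀ a : ℂ, (Polynomial.X - Polynomial.C a)^e ≠ 0 :=
    fun a => pow_ne_zero _ (Polynomial.X_sub_C_ne_zero a)
  have hndeg : ∀ a : ℂ, ((Polynomial.X - Polynomial.C a)^e).natDegree = e := by
    intro a
    rw [Polynomial.natDegree_pow, Polynomial.natDegree_X_sub_C, mul_one]
  have hdegprod : ((Polynomial.X - Polynomial.C 0)^e * ((Polynomial.X - Polynomial.C 1)^e *
      ((Polynomial.X - Polynomial.C (ω^2))^e * (Polynomial.X - Polynomial.C ω)^e))).natDegree
      = 4*e := by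
    rw [Polynomial.natDegree_mul (hXsub_ne 0)
        (mul_ne_zero (hXsub_ne 1) (mul_ne_zero (hXsub_ne (ω^2)) (hXsub_ne ω))),
      Polynomial.natDegree_mul (hXsub_ne 1) (mul_ne_zero (hXsub_ne (ω^2)) (hXsub_ne ω)),
      Polynomial.natDegree_mul (hXsub_ne (ω^2)) (hXsub_ne ω),
      hndeg, hndeg, hndeg, hndeg]
    ring
  have hle := Polynomial.natDegree_le_of_dvd dall hp
  rw [hdegprod] at hle
  omega

lemma coeff_comp_Xcube (p : Polynomial ℚ) (w : ℕ) :
    (p.comp (Polynomial.X^3)).coeff w = if 3 ∣ w then p.coeff (w/3) else 0 := by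
  rw [Polynomial.comp_eq_sum_left, Polynomial.sum_def, Polynomial.finset_sum_coeff]
  have h : ∀ e ∈ p.support, (Polynomial.C (p.coeff e) * (Polynomial.X^3)^e).coeff w
      = if w = 3*e then p.coeff e else 0 := by
    intro e _
    rw [← pow_mul, Polynomial.coeff_C_mul, Polynomial.coeff_X_pow, mul_ite, mul_one, mul_zero]
  rw [Finset.sum_congr rfl h]
  split_ifs with hdvd
  · obtain ⟨j, rfl⟩ := hdvd
    have hcond : ∀ e, (3*j = 3*e) = (e = j) := by
      intro e
      apply propext
      constructor <;> omega
    simp_rw [hcond]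
    rw [show (3*j)/3 = j from by omega]
    rw [Finset.sum_ite_eq' p.support j (fun e => p.coeff e)]
    split_ifs with hmem
    · rfl
    · exact (Polynomial.notMem_support_iff.mp hmem).symm
  · apply Finset.sum_eq_zero
    intro e _
    rw [if_neg (fun hc => hdvd ⟨e, hc⟩)]

lemma tri_exists (t : ℕ → QS) (h1 : ∀ i, coeff (R := ℚ) i (t i) = 1)
    (h0 : ∀ i j, j < i → coeff (R := ℚ) j (t i) = 0) (β : ℕ → ℚ) :
    ∀ M, ∃ c : ℕ → ℚ, ∀ j ≤ M,
      coeff (R := ℚ) j (∑ i ∈ Finset.range (M+1), C (R := ℚ) (c i) * t i) = β j := by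
  intro M
  induction M with
  | zero =>
      refine ⟨fun _ => β 0, ?_⟩
      intro j hj
      have : j = 0 := by omega
      subst this
      rw [Finset.sum_range_one, coeff_c_mul, h1 0, mul_one]
  | succ M ih =>
      obtain ⟨c, hc⟩ := ih
      set S := ∑ i ∈ Finset.range (M+1), C (R := ℚ) (c i) * t i with hS
      set γ := β (M+1) - coeff (R := ℚ) (M+1) S with hγ
      refine ⟨Function.update c (M+1) γ, ?_⟩
      intro j hj
      rw [Finset.sum_range_succ]
      have hsum : ∑ i ∈ Finset.range (M+1), C (R := ℚ) (Function.update c (M+1) γ i) * t i = S := by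
        apply Finset.sum_congr rfl
        intro i hi
        have : i ≠ M+1 := by have := Finset.mem_range.mp hi; omega
        rw [Function.update_of_ne this]
      rw [hsum, Function.update_self, map_add, coeff_c_mul]
      rcases Nat.lt_or_ge j (M+1) with h|h
      · rw [hc j (by omega), h0 (M+1) j h, mul_zero, add_zero]
      · have hj1 : j = M+1 := by omega
        subst hj1
        rw [h1 (M+1), mul_one, hγ]
        ring

lemma infinite_ne_half : Set.Infinite {t : ℂ | 1 + 2*t ≠ 0} := by
  have heq : {t : ℂ | 1 + 2*t ≠ 0} = {(-1/2 : ℂ)}ᶜ := by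
    ext t
    simp only [Set.mem_setOf_eq, Set.mem_compl_iff, Set.mem_singleton_iff]
    constructor
    · intro h hc
      exact h (by rw [hc]; ring)
    · intro h hc
      exact h (by linear_combination hc/2)
  rw [heq]
  exact Set.Finite.infinite_compl (Set.finite_singleton _)

lemma Str_basis (nn kk NN ii : ℕ) (hnk : nn = 2*kk) (hnN : nn = 4*NN) (hii : 3*ii ≤ NN) :
    StrP nn ((1 + Polynomial.C (8:ℂ) * Polynomial.X^3)^(NN-3*ii)
      * (Polynomial.X^3)^ii * (1 - Polynomial.X^3)^(3*ii))
    = Polynomial.C ((3:ℂ)^kk) * ((1 + Polynomial.C (8:ℂ) * Polynomial.X^3)^(NN-3*ii)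
      * (Polynomial.X^3)^ii * (1 - Polynomial.X^3)^(3*ii)) := by
  set a := NN - 3*ii with hadef
  set F : Polynomial ℂ := (1 + Polynomial.C (8:ℂ) * Polynomial.X^3)^a
      * (Polynomial.X^3)^ii * (1 - Polynomial.X^3)^(3*ii) with hF
  have hdeg1 : (1 + Polynomial.C (8:ℂ) * Polynomial.X^3).natDegree ≤ 3 := by
    apply le_trans (Polynomial.natDegree_add_le _ _)
    simp only [Polynomial.natDegree_one]
    apply max_le (by omega)
    apply le_trans (Polynomial.natDegree_mul_le)
    simp [Polynomial.natDegree_C, Polynomial.natDegree_X_pow]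
  have hdeg2 : ((1:Polynomial ℂ) - Polynomial.X^3).natDegree ≤ 3 := by
    apply le_trans (Polynomial.natDegree_sub_le _ _)
    simp [Polynomial.natDegree_one, Polynomial.natDegree_X_pow]
  have hdegF : F.natDegree ≤ nn := by
    rw [hF]
    apply le_trans (Polynomial.natDegree_mul_le)
    have b1 : ((1 + Polynomial.C (8:ℂ) * Polynomial.X^3)^a
        * (Polynomial.X^3)^ii).natDegree ≤ 3*a + 3*ii := by
      apply le_trans (Polynomial.natDegree_mul_le)
      have p1 : ((1 + Polynomial.C (8:ℂ) * Polynomial.X^3)^a).natDegree ≤ 3*a := by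
        apply le_trans (Polynomial.natDegree_pow_le)
        calc a * (1 + Polynomial.C (8:ℂ) * Polynomial.X^3).natDegree ≤ a * 3 :=
              Nat.mul_le_mul_left a hdeg1
          _ = 3*a := by ring
      have p2 : ((Polynomial.X^3 : Polynomial ℂ)^ii).natDegree ≤ 3*ii := by
        apply le_trans (Polynomial.natDegree_pow_le)
        simp [Polynomial.natDegree_X_pow]
        omega
      omega
    have b2 : (((1:Polynomial ℂ) - Polynomial.X^3)^(3*ii)).natDegree ≤ 9*ii := by
      apply le_trans (Polynomial.natDegree_pow_le)
      calc 3*ii * ((1:Polynomial ℂ) - Polynomial.X^3).natDegree ≤ 3*ii*3 :=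
            Nat.mul_le_mul_left _ hdeg2
        _ = 9*ii := by ring
    omega
  apply Polynomial.eq_of_infinite_eval_eq
  apply Set.Infinite.mono _ infinite_ne_half
  intro t ht
  simp only [Set.mem_setOf_eq] at ht ⊢
  rw [Str_eval_comp nn F hdegF t ht]
  set s := (1-t)/(1+2*t) with hsdef
  have k1 : (1+2*t)^4 * (1+8*s^3) = 9*(1+8*t^3) := by
    rw [hsdef]
    field_simp
    ring
  have k2 : (1+2*t)^4 * (s*(1-s^3)) = 9*(t*(1-t^3)) := by
    rw [hsdef]
    field_simp
    ring
  have hFeval : ∀ z : ℂ, F.eval z = (1+8*z^3)^a * (z^3)^ii * (1-z^3)^(3*ii) := by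
    intro z
    rw [hF]
    simp [Polynomial.eval_mul, Polynomial.eval_pow, Polynomial.eval_add, Polynomial.eval_sub,
      Polynomial.eval_one, Polynomial.eval_X, Polynomial.eval_C]
  rw [hFeval s, show Polynomial.eval t (Polynomial.C ((3:ℂ)^kk) * F)
      = (3:ℂ)^kk * ((1+8*t^3)^a * (t^3)^ii * (1-t^3)^(3*ii)) from by
    rw [Polynomial.eval_mul, Polynomial.eval_C, hFeval]]
  have hsplit : (1+2*t)^nn = ((1+2*t)^4)^a * ((1+2*t)^4)^(3*ii) := by
    rw [← pow_mul, ← pow_mul, ← pow_add]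
    congr 1
    omega
  have collect : (1+2*t)^nn * ((1+8*s^3)^a * (s^3)^ii * (1-s^3)^(3*ii))
      = ((1+2*t)^4 * (1+8*s^3))^a * ((1+2*t)^4 * (s*(1-s^3)))^(3*ii) := by
    rw [hsplit, mul_pow, mul_pow]
    rw [show ((s:ℂ)^3)^ii = s^(3*ii) from by rw [← pow_mul]]
    rw [mul_pow]
    ring
  rw [collect, k1, k2]
  have h9 : (9:ℂ) = 3^2 := by norm_num
  have hkk : 2*a + 2*(3*ii) = kk := by omega
  calc (9*(1+8*t^3))^a * (9*(t*(1-t^3)))^(3*ii)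
      = (3:ℂ)^(2*a) * 3^(2*(3*ii)) * ((1+8*t^3)^a * (t^3)^ii * (1-t^3)^(3*ii)) := by
        rw [mul_pow, mul_pow, h9, ← pow_mul, ← pow_mul]
        rw [show ((t:ℂ)*(1-t^3))^(3*ii) = t^(3*ii) * (1-t^3)^(3*ii) from mul_pow _ _ _]
        rw [show ((t:ℂ)^3)^ii = t^(3*ii) from by rw [← pow_mul]]
        ring
    _ = (3:ℂ)^kk * ((1+8*t^3)^a * (t^3)^ii * (1-t^3)^(3*ii)) := by
        rw [← pow_add, hkk]

end Code

end
end MS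

open MvPolynomial
open scoped BigOperators

/-- Mallows–Sloane bound for Type III codes: a ternary self-dual code of length `n`
with minimum weight `d` satisfies `d ≤ 3⌊n/12⌋ + 3`. -/
theorem typeIII_mallows_sloane {n : ℕ} (C : Submodule (ZMod 3) (Fin n → ZMod 3))
    (hsd : C = dualCode C) (d : ℕ)
    (hmin : (∃ v ∈ C, v ≠ 0 ∧ wt v = d) ∧ ∀ v ∈ C, v ≠ 0 → d ≤ wt v) :
    d ≤ 3 * (n / 12) + 3 := by
  classical
  obtain ⟨⟨v₀, hv₀C, hv₀ne, hwt₀⟩, hminlb⟩ := hmin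
  by_contra hcon
  push_neg at hcon
  set m := n / 12 with hm
  rcases Nat.eq_zero_or_pos n with hn0 | hnpos
  · subst hn0
    exact hv₀ne (funext fun i => i.elim0)
  have h3d : 3 ∣ d := hwt₀ ▸ MS.wt_mod_three C hsd v₀ hv₀C
  have hd6 : 3*m + 6 ≤ d := by omega
  obtain ⟨k, hn2k, hcard⟩ := MS.card_eq_pow C hsd
  have hcard0 : (((MS.CS C).card : ℂ)) ≠ 0 := Nat.cast_ne_zero.mpr (MS.card_CS_pos C).ne'
  have hQω : ∀ x y : ℂ, MS.Qf C x (MS.ω*y) = MS.Qf C x y := by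
    intro x y
    apply Finset.sum_congr rfl
    intro v hv
    obtain ⟨tt, htt⟩ := MS.wt_mod_three C hsd v ((MS.mem_CS C).mp hv)
    rw [mul_pow, htt, pow_mul, MS.hω3, one_pow, one_mul]
  -- 4 ∣ n
  have hEall : (3+6*MS.ω)^n = (((MS.CS C).card : ℂ))^3 := by
    have E1 := MS.MW C hsd 1 MS.ω
    have E1' : MS.Qf C 1 MS.ω = ((MS.CS C).card : ℂ) := by
      have h := hQω 1 1
      rw [mul_one] at h
      rw [h, MS.Qf_diag, one_pow, mul_one]
    have E2 : MS.Qf C (1+2*MS.ω) (MS.ω - MS.ω^2) = MS.Qf C (1+2*MS.ω) (1 - MS.ω) := by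
      have h := hQω (1+2*MS.ω) (1-MS.ω)
      rw [show MS.ω*(1-MS.ω) = MS.ω - MS.ω^2 from by ring] at h
      exact h
    have E3 := MS.MW C hsd (1+2*MS.ω) (MS.ω - MS.ω^2)
    rw [show (1+2*MS.ω) + 2*(MS.ω - MS.ω^2) = 3+6*MS.ω from by
        linear_combination (-2:ℂ)*MS.hsum,
      show (1+2*MS.ω) - (MS.ω - MS.ω^2) = 0 from by linear_combination MS.hsum,
      MS.Qf_x_zero] at E3
    rw [E3, E2, E1, E1']
    ring
  have hkeven : ∃ k2, k = 2*k2 := by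
    have hsq : ((3:ℂ)+6*MS.ω)^2 = -27 := by linear_combination (36:ℂ)*MS.hsum
    have h1 : ((3:ℂ)+6*MS.ω)^n = ((-27:ℂ))^k := by
      rw [hn2k, pow_mul, hsq]
    have h2 : (((MS.CS C).card : ℂ))^3 = (27:ℂ)^k := by
      rw [hcard]
      push_cast
      rw [← pow_mul, show (27:ℂ) = 3^3 from by norm_num, ← pow_mul]
      congr 1
      omega
    have h3 : ((-27:ℂ))^k = (27:ℂ)^k := by rw [← h1, hEall, h2]
    rcases Nat.even_or_odd k with he | ho
    · obtain ⟨k2, hk2⟩ := he; exact ⟨k2, by omega⟩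
    · exfalso
      rw [ho.neg_pow] at h3
      have h27 : ((27:ℂ))^k ≠ 0 := pow_ne_zero _ (by norm_num)
      exact h27 (by linear_combination -h3/2)
  obtain ⟨k2, hk2⟩ := hkeven
  set N := n/4 with hN
  have hn4 : n = 4*N := by omega
  have hN1 : 1 ≤ N := by omega
  have h3m : 3*m ≤ N := by omega
  have hN2 : N ≤ 3*m+2 := by omega
  -- triangular coefficients
  set tfun : ℕ → PowerSeries ℚ :=
    fun i => MS.sB^(N-3*i) * PowerSeries.X^i * MS.sA^(3*i) with htfun
  have hstruct1 : ∀ i : ℕ, PowerSeries.coeff (R := ℚ) i (tfun i) = 1 := by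
    intro i
    show PowerSeries.coeff (R := ℚ) i (MS.sB^(N-3*i) * PowerSeries.X^i * MS.sA^(3*i)) = 1
    rw [show MS.sB^(N-3*i) * PowerSeries.X^i * MS.sA^(3*i)
        = PowerSeries.X^i * (MS.sB^(N-3*i) * MS.sA^(3*i)) from by ring,
      PowerSeries.coeff_X_pow_mul', if_pos le_rfl, Nat.sub_self,
      PowerSeries.coeff_zero_eq_constantCoeff, map_mul, map_pow, map_pow,
      MS.constA, MS.constB]
    norm_num
  have hstruct0 : ∀ i j : ℕ, j < i → PowerSeries.coeff (R := ℚ) j (tfun i) = 0 := by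
    intro i j hj
    show PowerSeries.coeff (R := ℚ) j (MS.sB^(N-3*i) * PowerSeries.X^i * MS.sA^(3*i)) = 0
    rw [show MS.sB^(N-3*i) * PowerSeries.X^i * MS.sA^(3*i)
        = PowerSeries.X^i * (MS.sB^(N-3*i) * MS.sA^(3*i)) from by ring,
      PowerSeries.coeff_X_pow_mul', if_neg (by omega)]
  obtain ⟨c, hc⟩ := MS.tri_exists tfun hstruct1 hstruct0 (fun j => if j = 0 then 1 else 0) m
  set uQ : ℕ → Polynomial ℚ := fun i =>
    (1 + Polynomial.C (8:ℚ) * Polynomial.X)^(N-3*i) * Polynomial.X^i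
      * (1-Polynomial.X)^(3*i) with huQ
  set eQbase : Polynomial ℚ := ∑ i ∈ Finset.range (m+1), Polynomial.C (c i) * uQ i
    with heQbase
  have hterm : ∀ i, ((uQ i : Polynomial ℚ) : PowerSeries ℚ) = tfun i := by
    intro i
    rw [huQ, htfun]
    push_cast [Polynomial.coe_mul, Polynomial.coe_pow, Polynomial.coe_add,
      Polynomial.coe_sub, Polynomial.coe_one, Polynomial.coe_X, Polynomial.coe_C]
    rw [MS.sA_def, MS.sB_def, MS.c_ofNat 8]
  have hEc : ∀ j, PowerSeries.coeff (R := ℚ) j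
      (∑ i ∈ Finset.range (m+1), PowerSeries.C (R := ℚ) (c i) * tfun i) = eQbase.coeff j := by
    intro j
    rw [map_sum, heQbase, Polynomial.finset_sum_coeff]
    apply Finset.sum_congr rfl
    intro i _
    rw [MS.coeff_c_mul, Polynomial.coeff_C_mul, ← hterm i, Polynomial.coeff_coe]
  set φ : ℚ →+* ℂ := algebraMap ℚ ℂ with hφ
  set eQ : Polynomial ℚ := eQbase.comp (Polynomial.X^3) with heQ
  set eC : Polynomial ℂ := eQ.map φ with heC
  have heCcoeff : ∀ w, eC.coeff w = φ (if 3 ∣ w then eQbase.coeff (w/3) else 0) := by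
    intro w
    rw [heC, Polynomial.coeff_map, heQ, MS.coeff_comp_Xcube]
  have hq0 : (MS.qpoly C).coeff 0 = 1 := by
    rw [MS.qpoly_coeff]
    have hfil : (MS.CS C).filter (fun v => wt v = 0) = {0} := by
      ext v
      simp only [Finset.mem_filter, Finset.mem_singleton, MS.mem_CS]
      constructor
      · rintro ⟨_, hw⟩
        exact (MS.wt_eq_zero_iff v).mp hw
      · rintro rfl
        exact ⟨C.zero_mem, (MS.wt_eq_zero_iff 0).mpr rfl⟩
    rw [hfil]
    simp
  have hqz : ∀ w, 1 ≤ w → w < d → (MS.qpoly C).coeff w = 0 := by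
    intro w h1 h2
    rw [MS.qpoly_coeff]
    have hfil : (MS.CS C).filter (fun v => wt v = w) = ∅ := by
      apply Finset.filter_eq_empty_iff.mpr
      intro v hv hw
      have hvC := (MS.mem_CS C).mp hv
      have hvne : v ≠ 0 := fun h => by
        rw [h] at hw
        rw [(MS.wt_eq_zero_iff (0 : Fin n → ZMod 3)).mpr rfl] at hw
        omega
      have := hminlb v hvC hvne
      omega
    rw [hfil]
    simp
  have hqnd : ∀ w, ¬ (3 ∣ w) → (MS.qpoly C).coeff w = 0 := by
    intro w hw
    rw [MS.qpoly_coeff]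
    have hfil : (MS.CS C).filter (fun v => wt v = w) = ∅ := by
      apply Finset.filter_eq_empty_iff.mpr
      intro v hv hweq
      exact hw (hweq ▸ MS.wt_mod_three C hsd v ((MS.mem_CS C).mp hv))
    rw [hfil]
    simp
  set p : Polynomial ℂ := MS.qpoly C - eC with hpdef
  have hplow : ∀ w, w < 3*m+3 → p.coeff w = 0 := by
    intro w hw
    rw [hpdef, Polynomial.coeff_sub, heCcoeff]
    by_cases h3 : 3 ∣ w
    · obtain ⟨j, rfl⟩ := h3
      have hjm : j ≤ m := by omega
      rw [if_pos ⟨j, rfl⟩, show (3*j)/3 = j from by omega]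
      have hce : eQbase.coeff j = if j = 0 then 1 else 0 := by
        rw [← hEc j, hc j hjm]
      rw [hce]
      by_cases hj0 : j = 0
      · subst hj0
        rw [show 3*0 = 0 from rfl, hq0]
        simp
      · rw [if_neg hj0, hqz (3*j) (by omega) (by omega)]
        simp
    · rw [if_neg h3, hqnd w h3]
      simp
  have hX : (Polynomial.X : Polynomial ℂ)^(3*m+3) ∣ p :=
    Polynomial.X_pow_dvd_iff.mpr (fun w hw => hplow w hw)
  set Fic : ℕ → Polynomial ℂ := fun i =>
    (1 + Polynomial.C (8:ℂ) * Polynomial.X^3)^(N-3*i) * (Polynomial.X^3)^i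
      * (1 - Polynomial.X^3)^(3*i) with hFic
  have heCrep : eC = ∑ i ∈ Finset.range (m+1), Polynomial.C (φ (c i)) * Fic i := by
    rw [heC, heQ, heQbase]
    rw [Polynomial.sum_comp]
    rw [Polynomial.map_sum]
    apply Finset.sum_congr rfl
    intro i _
    rw [huQ, hFic]
    simp only [Polynomial.mul_comp, Polynomial.pow_comp, Polynomial.add_comp,
      Polynomial.sub_comp, Polynomial.one_comp, Polynomial.X_comp, Polynomial.C_comp]
    simp only [Polynomial.map_mul, Polynomial.map_pow, Polynomial.map_add,
      Polynomial.map_sub, Polynomial.map_one, Polynomial.map_X, Polynomial.map_C]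
    rw [show φ (8:ℚ) = (8:ℂ) from by simp [hφ]]
  have hStreC : MS.StrP n eC = Polynomial.C (((MS.CS C).card : ℂ)) * eC := by
    rw [heCrep, MS.Str_sum, Finset.mul_sum]
    apply Finset.sum_congr rfl
    intro i hi
    have him : 3*i ≤ N := by
      have := Finset.mem_range.mp hi
      omega
    rw [hFic, MS.Str_basis n k N i hn2k hn4 him, hcard]
    push_cast
    ring
  have hStrp : MS.StrP n p = Polynomial.C (((MS.CS C).card : ℂ)) * p := by
    rw [hpdef, MS.Str_sub, MS.Str_q C hsd, hStreC]
    ring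
  have h1X : ((1:Polynomial ℂ) - Polynomial.X)^(3*m+3) ∣ p := by
    have hdvdStr : ((1:Polynomial ℂ) - Polynomial.X)^(3*m+3) ∣ MS.StrP n p := by
      rw [MS.StrP]
      apply Finset.dvd_sum
      intro w _
      by_cases hcase : w < 3*m+3
      · rw [hplow w hcase]
        simp
      · apply Dvd.dvd.mul_left
        exact dvd_mul_of_dvd_right (pow_dvd_pow _ (by omega)) _
    rw [hStrp] at hdvdStr
    obtain ⟨c', hc'⟩ := hdvdStr
    refine ⟨Polynomial.C ((((MS.CS C).card : ℂ)))⁻¹ * c', ?_⟩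
    calc p = Polynomial.C ((((MS.CS C).card : ℂ)))⁻¹
          * (Polynomial.C (((MS.CS C).card : ℂ)) * p) := by
          rw [← mul_assoc, ← map_mul, inv_mul_cancel₀ hcard0, map_one, one_mul]
      _ = ((1:Polynomial ℂ) - Polynomial.X)^(3*m+3)
          * (Polynomial.C ((((MS.CS C).card : ℂ)))⁻¹ * c') := by
          rw [hc']
          ring
  have hfix : p.comp (Polynomial.C MS.ω * Polynomial.X) = p := by
    apply MS.comp_omega_fixed
    intro w hw
    rw [hpdef, Polynomial.coeff_sub, hqnd w hw, heCcoeff, if_neg hw, map_zero, sub_zero]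
  have hpdeg : p.natDegree ≤ n := by
    rw [hpdef]
    apply le_trans (Polynomial.natDegree_sub_le _ _)
    apply max_le (MS.qpoly_natDegree_le C)
    have hbase : eQbase.natDegree ≤ N+m := by
      rw [heQbase]
      apply Polynomial.natDegree_sum_le_of_forall_le
      intro i hi
      have him : i ≤ m := by
        have := Finset.mem_range.mp hi
        omega
      apply le_trans (Polynomial.natDegree_mul_le)
      rw [Polynomial.natDegree_C, zero_add]
      rw [huQ]
      apply le_trans (Polynomial.natDegree_mul_le)
      have d1 : ((1 + Polynomial.C (8:ℚ) * Polynomial.X)^(N-3*i)).natDegree ≤ N-3*i := by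
        apply le_trans (Polynomial.natDegree_pow_le)
        have : (1 + Polynomial.C (8:ℚ) * Polynomial.X).natDegree ≤ 1 := by
          apply le_trans (Polynomial.natDegree_add_le _ _)
          simp only [Polynomial.natDegree_one]
          apply max_le (by omega)
          apply le_trans (Polynomial.natDegree_mul_le)
          simp [Polynomial.natDegree_C]
        calc (N-3*i) * (1 + Polynomial.C (8:ℚ) * Polynomial.X).natDegree
            ≤ (N-3*i) * 1 := Nat.mul_le_mul_left _ this
          _ = N-3*i := by omega
      have d2 : (((1:Polynomial ℚ) - Polynomial.X)^(3*i)).natDegree ≤ 3*i := by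
        apply le_trans (Polynomial.natDegree_pow_le)
        have : ((1:Polynomial ℚ) - Polynomial.X).natDegree ≤ 1 := by
          apply le_trans (Polynomial.natDegree_sub_le _ _)
          simp [Polynomial.natDegree_one]
        calc 3*i * ((1:Polynomial ℚ) - Polynomial.X).natDegree ≤ 3*i*1 :=
              Nat.mul_le_mul_left _ this
          _ = 3*i := by omega
      have d3 : ((1 + Polynomial.C (8:ℚ) * Polynomial.X)^(N-3*i)
          * Polynomial.X^i).natDegree ≤ N-3*i + i := by
        apply le_trans (Polynomial.natDegree_mul_le)
        have := Polynomial.natDegree_X_pow (R := ℚ) i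
        omega
      omega
    calc eC.natDegree ≤ eQ.natDegree := Polynomial.natDegree_map_le
      _ ≤ eQbase.natDegree * 3 := by
          apply le_trans (Polynomial.natDegree_comp_le)
          rw [Polynomial.natDegree_X_pow]
      _ ≤ (N+m)*3 := Nat.mul_le_mul_right _ hbase
      _ ≤ n := by omega
  have hn12 : n < 12*(m+1) := by omega
  have hp0 : p = 0 := MS.zero_count m hpdeg hn12 hX h1X hfix
  have hqe : MS.qpoly C = eC := by
    rw [← sub_eq_zero]
    exact hp0
  have hlast : eQbase.coeff (m+1) = 0 := by
    have h1 : (MS.qpoly C).coeff (3*(m+1)) = 0 := hqz _ (by omega) (by omega)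
    rw [hqe, heCcoeff, if_pos ⟨m+1, rfl⟩, show (3*(m+1))/3 = m+1 from by omega] at h1
    exact φ.injective (by rw [h1, map_zero])
  apply MS.PS_contra m N hN1 h3m hN2 c
  intro j hj
  show PowerSeries.coeff (R := ℚ) j (∑ i ∈ Finset.range (m+1), PowerSeries.C (R := ℚ) (c i)
    * (MS.sB^(N-3*i) * PowerSeries.X^i * MS.sA^(3*i))) = if j = 0 then 1 else 0
  rcases Nat.lt_or_ge j (m+1) with h|h
  · exact hc j (by omega)
  · have hj1 : j = m+1 := by omega
    subst hj1
    rw [hEc (m+1), hlast, if_neg (by omega)]
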